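/- Let d ≥ 1 be an integer, s > 0, and for |x| < 1 in ℝ^d define dμ_s = M(1 − |x|²)^{(s−d)/2} dx with M = Γ(1 + s/2)/(π^{d/2} Γ(1 + (s−d)/2)), where d − 2 < s < d. Then for every point x₀ with |x₀| = 1 there exist constants C > 1 and r₀ > 0 such that for all 0 < r < r₀, C^{−1} r^{(d+s)/2} ≤ μ_s(B(x₀, r)) ≤ C r^{(d+s)/2}. -/

import Mathlib

open MeasureTheory Set

lemma inner_int {a r M α : ℝ} (hM : 0 ≤ M) (hα : -1 < α)
    (ha : a ≤ 1) :
    ∫⁻ u in Set.Ioo (1 - r) a, ENNReal.ofReal (M * (a - u) ^ α) ≤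
      ENNReal.ofReal (M * (r ^ (α + 1) / (α + 1))) := by
  rcases le_or_gt a (1 - r) with h | h
  · rw [Set.Ioo_eq_empty (by exact fun hl => absurd h (not_le.2 hl)), Measure.restrict_empty,
      lintegral_zero_measure]
    exact zero_le
  · have hδ : 0 < a - (1 - r) := by linarith
    have hδr : a - (1 - r) ≤ r := by linarith
    have hint0 : IntervalIntegrable (fun t : ℝ => t ^ α) volume 0 (a - (1 - r)) :=
      intervalIntegral.intervalIntegrable_rpow' hα
    have hint : IntervalIntegrable (fun u : ℝ => (a - u) ^ α) volume (1 - r) a := by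
      have := hint0.comp_sub_left a
      simpa using this.symm
    have hintM : IntervalIntegrable (fun u : ℝ => M * (a - u) ^ α) volume (1 - r) a :=
      hint.const_mul M
    have hIoo : IntegrableOn (fun u : ℝ => M * (a - u) ^ α) (Set.Ioo (1 - r) a) volume := by
      have := (intervalIntegrable_iff_integrableOn_Ioc_of_le h.le).1 hintM
      exact this.mono_set Set.Ioo_subset_Ioc_self
    rw [← ofReal_integral_eq_lintegral_ofReal hIoo]
    · apply ENNReal.ofReal_le_ofReal
      have heq : ∫ u in Set.Ioo (1 - r) a, M * (a - u) ^ α =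
          M * ∫ u in (1 - r)..a, (a - u) ^ α := by
        rw [← integral_Ioc_eq_integral_Ioo, ← intervalIntegral.integral_of_le h.le,
          intervalIntegral.integral_const_mul]
      rw [heq, intervalIntegral.integral_comp_sub_left (fun t : ℝ => t ^ α) a, sub_self]
      rw [integral_rpow (Or.inl hα), Real.zero_rpow (by linarith), sub_zero]
      have h1 : (a - (1 - r)) ^ (α + 1) ≤ r ^ (α + 1) :=
        Real.rpow_le_rpow hδ.le hδr (by linarith)
      have h2 : 0 < α + 1 := by linarith
      exact mul_le_mul_of_nonneg_left (by gcongr) hM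
    · filter_upwards [ae_restrict_mem measurableSet_Ioo] with u hu
      exact mul_nonneg hM (Real.rpow_nonneg (by simp [Set.mem_Ioo] at hu; linarith) _)

set_option maxHeartbeats 2000000 in
theorem stmt11 (d : ℕ) (hd : 1 ≤ d) (s : ℝ) (hs : 0 < s)
    (h1 : (d : ℝ) - 2 < s) (h2 : s < d) (M : ℝ)
    (hM : M = Real.Gamma (1 + s / 2) /
      (Real.pi ^ ((d : ℝ) / 2) * Real.Gamma (1 + (s - d) / 2)))
    (μ : Measure (EuclideanSpace ℝ (Fin d)))
    (hμ : μ = ((volume : Measure (EuclideanSpace ℝ (Fin d))).restrict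
        (Metric.ball 0 1)).withDensity
        (fun x => ENNReal.ofReal (M * (1 - ‖x‖ ^ 2) ^ ((s - (d : ℝ)) / 2))))
    (x₀ : EuclideanSpace ℝ (Fin d)) (hx₀ : ‖x₀‖ = 1) :
    ∃ C > (1 : ℝ), ∃ r₀ > (0 : ℝ), ∀ r : ℝ, 0 < r → r < r₀ →
      ENNReal.ofReal (C⁻¹ * r ^ (((d : ℝ) + s) / 2)) ≤ μ (Metric.ball x₀ r) ∧
        μ (Metric.ball x₀ r) ≤ ENNReal.ofReal (C * r ^ (((d : ℝ) + s) / 2)) := by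
  obtain ⟨n, rfl⟩ : ∃ n, d = n + 1 := ⟨d - 1, (Nat.succ_pred_eq_of_pos hd).symm⟩
  have hdcast : ((n + 1 : ℕ) : ℝ) = (n : ℝ) + 1 := by push_cast; ring
  have hM0 : 0 < M := by
    rw [hM]
    apply div_pos (Real.Gamma_pos_of_pos (by linarith))
    exact mul_pos (Real.rpow_pos_of_pos Real.pi_pos _)
      (Real.Gamma_pos_of_pos (by rw [hdcast] at h1; linarith))
  clear hM
  set dR : ℝ := ((n + 1 : ℕ) : ℝ) with hdR
  set α : ℝ := (s - dR) / 2 with hαdef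
  have hα1 : -1 < α := by rw [hαdef]; rw [hdcast] at h1; rw [hdcast]; linarith
  have hα0 : α < 0 := by rw [hαdef]; linarith
  set f : EuclideanSpace ℝ (Fin (n + 1)) → ENNReal := fun x => ENNReal.ofReal (M * (1 - ‖x‖ ^ 2) ^ α) with hfdef
  have fmeas : Measurable f := by
    apply Measurable.ennreal_ofReal
    exact ((measurable_const.sub (measurable_norm.pow_const 2)).pow_const α).const_mul M
  have hball : ∀ (z : EuclideanSpace ℝ (Fin (n + 1))) (r' : ℝ), μ (Metric.ball z r') =
      ∫⁻ x in Metric.ball z r' ∩ Metric.ball 0 1, f x := by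
    intro z r'
    rw [hμ, withDensity_apply _ measurableSet_ball, Measure.restrict_restrict measurableSet_ball]
  set V : ENNReal := volume (Metric.ball (0 : EuclideanSpace ℝ (Fin (n + 1))) 1) with hVdef
  have hVpos : 0 < V := Metric.measure_ball_pos volume 0 one_pos
  have hVfin : V ≠ ⊤ := measure_ball_lt_top.ne
  have hVt : 0 < V.toReal := ENNReal.toReal_pos hVpos.ne' hVfin
  set c₁ : ℝ := M * (5 / 4 : ℝ) ^ α * (1 / 8 : ℝ) ^ (n + 1) * V.toReal with hc₁
  set c₂ : ℝ := M * 2 ^ n / (α + 1) with hc₂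
  have hc₁pos : 0 < c₁ := by
    apply mul_pos (mul_pos (mul_pos hM0 (Real.rpow_pos_of_pos (by norm_num) _)) (by positivity)) hVt
  have hc₂pos : 0 < c₂ := by
    apply div_pos (mul_pos hM0 (by positivity)); linarith
  have hexp : (dR + s) / 2 = α + ((n : ℝ) + 1) := by rw [hαdef, hdcast]; ring
  ------------------------------------------------------------------
  -- LOWER BOUND
  ------------------------------------------------------------------
  have hlower : ∀ r : ℝ, 0 < r → r < 1 / 2 →
      ENNReal.ofReal (c₁ * r ^ ((dR + s) / 2)) ≤
        ∫⁻ x in Metric.ball x₀ r ∩ Metric.ball 0 1, f x := by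
    intro r hr hr2
    set c : EuclideanSpace ℝ (Fin (n + 1)) := (1 - r / 2) • x₀ with hcdef
    have hcx : ‖c - x₀‖ = r / 2 := by
      have hcc : c - x₀ = (-(r / 2)) • x₀ := by
        rw [hcdef]
        module
      rw [hcc, norm_smul, hx₀]
      simp [abs_of_nonneg hr.le]
    have hcn : ‖c‖ = 1 - r / 2 := by
      rw [hcdef, norm_smul, hx₀, mul_one, Real.norm_eq_abs, abs_of_nonneg (by linarith)]
    have hsub : Metric.ball c (r / 8) ⊆ Metric.ball x₀ r ∩ Metric.ball 0 1 := by
      intro x hx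
      rw [Metric.mem_ball, dist_eq_norm] at hx
      constructor
      · rw [Metric.mem_ball, dist_eq_norm]
        calc ‖x - x₀‖ ≤ ‖x - c‖ + ‖c - x₀‖ := by
              simpa using norm_add_le (x - c) (c - x₀)
          _ < r / 8 + r / 2 := by rw [hcx]; linarith
          _ < r := by linarith
      · rw [Metric.mem_ball, dist_zero_right]
        calc ‖x‖ ≤ ‖x - c‖ + ‖c‖ := by simpa using norm_add_le (x - c) c
          _ < r / 8 + (1 - r / 2) := by rw [hcn]; linarith
          _ < 1 := by linarith
    have hxlb : ∀ x ∈ Metric.ball c (r / 8),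
        (fun _ => ENNReal.ofReal (M * (5 * r / 4) ^ α)) x ≤ f x := by
      intro x hx
      rw [Metric.mem_ball, dist_eq_norm] at hx
      have hxu : ‖x‖ < 1 - 3 * r / 8 := by
        calc ‖x‖ ≤ ‖x - c‖ + ‖c‖ := by simpa using norm_add_le (x - c) c
          _ < r / 8 + (1 - r / 2) := by rw [hcn]; linarith
          _ = 1 - 3 * r / 8 := by ring
      have hxl : 1 - 5 * r / 8 < ‖x‖ := by
        have hh : ‖c‖ - ‖x - c‖ ≤ ‖x‖ := by
          have h3 := norm_sub_norm_le c (c - x)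
          simp only [sub_sub_cancel] at h3
          calc ‖c‖ - ‖x - c‖ = ‖c‖ - ‖c - x‖ := by rw [norm_sub_rev]
            _ ≤ ‖x‖ := h3
        rw [hcn] at hh; linarith
      have hxnn : (0 : ℝ) ≤ ‖x‖ := norm_nonneg _
      have hp : 0 < 1 - ‖x‖ ^ 2 := by nlinarith
      have hub : 1 - ‖x‖ ^ 2 ≤ 5 * r / 4 := by nlinarith
      apply ENNReal.ofReal_le_ofReal
      exact mul_le_mul_of_nonneg_left (Real.rpow_le_rpow_of_nonpos hp hub hα0.le) hM0.le
    have hvol : volume (Metric.ball c (r / 8)) = ENNReal.ofReal ((r / 8) ^ (n + 1)) * V := by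
      rw [hVdef, Measure.addHaar_ball volume c (by positivity : (0:ℝ) ≤ r / 8)]
      congr 2
      simp [finrank_euclideanSpace_fin]
    calc ENNReal.ofReal (c₁ * r ^ ((dR + s) / 2))
        = ENNReal.ofReal (M * (5 * r / 4) ^ α) * (ENNReal.ofReal ((r / 8) ^ (n + 1)) * V) := by
          rw [← ENNReal.ofReal_toReal hVfin, ← ENNReal.ofReal_mul (by positivity),
            ← ENNReal.ofReal_mul (by positivity)]
          congr 1
          rw [hc₁, hexp]
          have h54 : (5 * r / 4 : ℝ) ^ α = (5 / 4 : ℝ) ^ α * r ^ α := by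
            rw [← Real.mul_rpow (by norm_num) hr.le]
            ring_nf
          have hrd : (r / 8 : ℝ) ^ (n + 1) = (1 / 8 : ℝ) ^ (n + 1) * r ^ (n + 1) := by
            rw [div_pow, one_div_pow, div_eq_mul_one_div (r ^ (n+1)), mul_comm]
          have hre : r ^ (α + ((n : ℝ) + 1)) = r ^ α * r ^ (n + 1) := by
            rw [← Real.rpow_natCast r (n + 1), ← Real.rpow_add hr]
            push_cast
            ring_nf
          rw [h54, hrd, hre]
          ring
      _ = ENNReal.ofReal (M * (5 * r / 4) ^ α) * volume (Metric.ball c (r / 8)) := by rw [hvol]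
      _ = ∫⁻ _ in Metric.ball c (r / 8), ENNReal.ofReal (M * (5 * r / 4) ^ α) ∂volume := by
          rw [setLIntegral_const]
      _ ≤ ∫⁻ x in Metric.ball c (r / 8), f x := setLIntegral_mono fmeas hxlb
      _ ≤ ∫⁻ x in Metric.ball x₀ r ∩ Metric.ball 0 1, f x := lintegral_mono_set hsub
  ------------------------------------------------------------------
  -- ROTATION
  ------------------------------------------------------------------
  set e₀ : EuclideanSpace ℝ (Fin (n + 1)) := EuclideanSpace.single (0 : Fin (n + 1)) (1 : ℝ) with he₀def
  have he₀ : ‖e₀‖ = 1 := by rw [he₀def, EuclideanSpace.norm_single]; norm_num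
  have hrot : ∀ r' : ℝ, ∫⁻ x in Metric.ball x₀ r' ∩ Metric.ball 0 1, f x =
      ∫⁻ x in Metric.ball e₀ r' ∩ Metric.ball 0 1, f x := by
    intro r'
    obtain ⟨T, hTe⟩ : ∃ T : EuclideanSpace ℝ (Fin (n + 1)) ≃ₗᵢ[ℝ] EuclideanSpace ℝ (Fin (n + 1)),
        T e₀ = x₀ := ⟨Submodule.reflection (ℝ ∙ (e₀ - x₀))ᗮ, Submodule.reflection_sub (by rw [he₀, hx₀])⟩
    have hT : MeasurePreserving T := T.measurePreserving
    have hemb : MeasurableEmbedding T := T.toHomeomorph.measurableEmbedding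
    have hpre : T ⁻¹' (Metric.ball x₀ r' ∩ Metric.ball 0 1) =
        Metric.ball e₀ r' ∩ Metric.ball 0 1 := by
      ext x
      simp only [Set.mem_preimage, Set.mem_inter_iff, Metric.mem_ball, dist_eq_norm,
        dist_zero_right, sub_zero]
      have hA : ∀ z : EuclideanSpace ℝ (Fin (n + 1)), ‖T z - x₀‖ = ‖z - e₀‖ := by
        intro z
        rw [← hTe, ← map_sub]
        exact T.norm_map _
      have hB : ∀ z : EuclideanSpace ℝ (Fin (n + 1)), ‖T z‖ = ‖z‖ := fun z => T.norm_map z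
      rw [hA, hB]
    have key := hT.setLIntegral_comp_preimage_emb hemb f (Metric.ball x₀ r' ∩ Metric.ball 0 1)
    rw [hpre] at key
    rw [← key]
    refine lintegral_congr fun x => ?_
    simp only [hfdef, T.norm_map]
  ------------------------------------------------------------------
  -- UPPER BOUND
  ------------------------------------------------------------------
  have hupper : ∀ r : ℝ, 0 < r → r < 1 / 2 →
      (∫⁻ x in Metric.ball e₀ r ∩ Metric.ball 0 1, f x) ≤
        ENNReal.ofReal (c₂ * r ^ ((dR + s) / 2)) := by
    intro r hr hr2
    set a : (Fin n → ℝ) → ℝ := fun y => Real.sqrt (1 - ∑ i, (y i) ^ 2) with hadef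
    have hacont : Continuous a := by
      apply Real.continuous_sqrt.comp
      apply continuous_const.sub
      exact continuous_finset_sum _ fun i _ => (continuous_apply i).pow 2
    set F : ℝ × (Fin n → ℝ) → ENNReal :=
      fun p => ENNReal.ofReal (M * (a p.2 - p.1) ^ α) with hFdef
    set T : Set (ℝ × (Fin n → ℝ)) :=
      {p | (∀ i, p.2 i ∈ Set.Ioo (-r) r) ∧ p.1 ∈ Set.Ioo (1 - r) (a p.2)} with hTdef
    have hTmeas : MeasurableSet T := by
      have hrw : T = (Prod.snd ⁻¹' Set.pi Set.univ (fun _ : Fin n => Set.Ioo (-r) r)) ∩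
          ({p : ℝ × (Fin n → ℝ) | 1 - r < p.1} ∩ {p | p.1 < a p.2}) := by
        ext p
        simp [hTdef, Set.mem_pi, Set.mem_Ioo, and_assoc]
      rw [hrw]
      exact ((MeasurableSet.univ_pi fun _ => measurableSet_Ioo).preimage measurable_snd).inter
        ((measurableSet_lt measurable_const measurable_fst).inter
          (measurableSet_lt measurable_fst (hacont.measurable.comp measurable_snd)))
    have hFmeas : Measurable F := by
      apply Measurable.ennreal_ofReal
      exact (((hacont.measurable.comp measurable_snd).sub measurable_fst).pow_const α).const_mul M
    set G : ℝ × (Fin n → ℝ) → ENNReal := T.indicator F with hGdef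
    have hGmeas : Measurable G := hFmeas.indicator hTmeas
    -- pointwise bound
    have hpt : ∀ x : EuclideanSpace ℝ (Fin (n + 1)), (Metric.ball e₀ r ∩ Metric.ball 0 1).indicator f x ≤
        G (x 0, fun j => x j.succ) := by
      intro x
      by_cases hx : x ∈ Metric.ball e₀ r ∩ Metric.ball 0 1
      · rw [Set.indicator_of_mem hx]
        obtain ⟨hx1, hx2⟩ := hx
        rw [Metric.mem_ball, dist_eq_norm] at hx1
        rw [Metric.mem_ball, dist_zero_right] at hx2
        set u : ℝ := x 0 with hudef
        set y : Fin n → ℝ := fun j => x j.succ with hydef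
        have hsq : ∀ z : EuclideanSpace ℝ (Fin (n + 1)), ‖z‖ ^ 2 = ∑ i, (z i) ^ 2 := by
          intro z
          rw [EuclideanSpace.norm_eq, Real.sq_sqrt (Finset.sum_nonneg fun i _ => by positivity)]
          simp [Real.norm_eq_abs, sq_abs]
        have hnx : ‖x‖ ^ 2 = u ^ 2 + ∑ j, (y j) ^ 2 := by
          rw [hsq x, Fin.sum_univ_succ]
        have hne : ‖x - e₀‖ ^ 2 = (u - 1) ^ 2 + ∑ j, (y j) ^ 2 := by
          rw [hsq (x - e₀), Fin.sum_univ_succ]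
          have he0 : (x - e₀) 0 = u - 1 := by
            simp [he₀def, hudef, EuclideanSpace.single_apply]
          have hesucc : ∀ j : Fin n, (x - e₀) j.succ = x j.succ := by
            intro j
            simp [he₀def, EuclideanSpace.single_apply, (Fin.succ_ne_zero j)]
          rw [he0]
          congr 1
          exact Finset.sum_congr rfl fun j _ => by rw [hesucc j]
        set w : ℝ := ∑ j, (y j) ^ 2 with hwdef
        have hw0 : 0 ≤ w := Finset.sum_nonneg fun j _ => sq_nonneg _
        have hlt1 : u ^ 2 + w < 1 := by
          rw [← hnx]; nlinarith [norm_nonneg x]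
        have hltr : (u - 1) ^ 2 + w < r ^ 2 := by
          rw [← hne]; nlinarith [norm_nonneg (x - e₀)]
        have hu1 : 1 - r < u := by nlinarith
        have hu0 : 0 < u := by linarith
        have hw1 : w ≤ 1 := by nlinarith
        have ha2 : (a y) ^ 2 = 1 - w := by
          show Real.sqrt (1 - ∑ i, (y i) ^ 2) ^ 2 = 1 - w
          rw [← hwdef, Real.sq_sqrt (by linarith)]
        have ha0 : 0 ≤ a y := Real.sqrt_nonneg _
        have hua : u < a y := by nlinarith
        have hyi : ∀ i, y i ∈ Set.Ioo (-r) r := by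
          intro i
          have hle : (y i) ^ 2 ≤ w := by
            rw [hwdef]
            exact Finset.single_le_sum (fun j _ => sq_nonneg (y j)) (Finset.mem_univ i)
          constructor <;> nlinarith
        have hmem : (u, y) ∈ T := ⟨hyi, hu1, hua⟩
        rw [hGdef, Set.indicator_apply, if_pos hmem]
        apply ENNReal.ofReal_le_ofReal
        apply mul_le_mul_of_nonneg_left _ hM0.le
        apply Real.rpow_le_rpow_of_nonpos (by nlinarith : (0:ℝ) < a y - u) ?_ hα0.le
        rw [hnx]
        nlinarith
      · rw [Set.indicator_of_notMem hx]
        exact zero_le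
    set K : ENNReal := ENNReal.ofReal (M * (r ^ (α + 1) / (α + 1))) with hKdef
    have hin : ∀ y : Fin n → ℝ, (∫⁻ u, G (u, y)) ≤
        (Set.pi Set.univ fun _ : Fin n => Set.Ioo (-r) r).indicator (fun _ => K) y := by
      intro y
      by_cases hy : ∀ i, y i ∈ Set.Ioo (-r) r
      · have hGy : ∀ u, G (u, y) = (Set.Ioo (1 - r) (a y)).indicator
            (fun u => ENNReal.ofReal (M * (a y - u) ^ α)) u := by
          intro u
          rw [hGdef, Set.indicator_apply, Set.indicator_apply]
          by_cases hu : u ∈ Set.Ioo (1 - r) (a y)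
          · rw [if_pos hu, if_pos (show (u, y) ∈ T from ⟨hy, hu⟩)]
          · rw [if_neg hu, if_neg (show (u, y) ∉ T from fun hmem => hu hmem.2)]
        rw [Set.indicator_of_mem (Set.mem_univ_pi.2 hy)]
        calc (∫⁻ u, G (u, y)) = ∫⁻ u, (Set.Ioo (1 - r) (a y)).indicator
              (fun u => ENNReal.ofReal (M * (a y - u) ^ α)) u := lintegral_congr hGy
          _ = ∫⁻ u in Set.Ioo (1 - r) (a y), ENNReal.ofReal (M * (a y - u) ^ α) :=
              lintegral_indicator measurableSet_Ioo _
          _ ≤ K := by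
              rw [hKdef]
              apply inner_int hM0.le hα1
              show Real.sqrt (1 - ∑ i, (y i) ^ 2) ≤ 1
              apply Real.sqrt_le_one.mpr
              have : (0:ℝ) ≤ ∑ i, (y i) ^ 2 := Finset.sum_nonneg fun i _ => sq_nonneg _
              linarith
      · have hGy : ∀ u, G (u, y) = 0 := by
          intro u
          rw [hGdef, Set.indicator_of_notMem]
          intro hmem
          exact hy hmem.1
        simp only [hGy]
        rw [lintegral_zero]
        exact zero_le
    have hbox : volume (Set.pi Set.univ fun _ : Fin n => Set.Ioo (-r) r) =
        ENNReal.ofReal (2 * r) ^ n := by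
      rw [volume_pi_pi]
      simp only [Real.volume_Ioo, Finset.prod_const, Finset.card_univ, Fintype.card_fin]
      congr 1
      ring
    calc ∫⁻ x in Metric.ball e₀ r ∩ Metric.ball 0 1, f x
        = ∫⁻ x, (Metric.ball e₀ r ∩ Metric.ball 0 1).indicator f x :=
          (lintegral_indicator (measurableSet_ball.inter measurableSet_ball) f).symm
      _ ≤ ∫⁻ x : EuclideanSpace ℝ (Fin (n + 1)), G (x 0, fun j => x j.succ) := lintegral_mono hpt
      _ = ∫⁻ z : Fin (n + 1) → ℝ, G (z 0, fun j => z j.succ) :=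
          (EuclideanSpace.volume_preserving_symm_measurableEquiv_toLp (Fin (n + 1))).lintegral_comp
            (hGmeas.comp ((measurable_pi_apply 0).prodMk
              (measurable_pi_iff.2 fun j => measurable_pi_apply j.succ)))
      _ = ∫⁻ p : ℝ × (Fin n → ℝ), G p := by
          rw [← (volume_preserving_piFinSuccAbove (fun _ : Fin (n + 1) => ℝ) 0).lintegral_comp
            hGmeas]
          congr 1
      _ = ∫⁻ y, ∫⁻ u, G (u, y) := by
          rw [Measure.volume_eq_prod, lintegral_prod_symm G hGmeas.aemeasurable]
      _ ≤ ∫⁻ y, (Set.pi Set.univ fun _ : Fin n => Set.Ioo (-r) r).indicator (fun _ => K) y :=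
          lintegral_mono hin
      _ = K * ENNReal.ofReal (2 * r) ^ n := by
          rw [lintegral_indicator (MeasurableSet.univ_pi fun _ => measurableSet_Ioo),
            setLIntegral_const, hbox]
      _ ≤ ENNReal.ofReal (c₂ * r ^ ((dR + s) / 2)) := by
          have hK0 : (0:ℝ) ≤ M * (r ^ (α + 1) / (α + 1)) :=
            mul_nonneg hM0.le (div_nonneg (Real.rpow_nonneg hr.le _) (by linarith))
          rw [hKdef, ← ENNReal.ofReal_pow (by positivity), ← ENNReal.ofReal_mul hK0]
          apply ENNReal.ofReal_le_ofReal
          apply le_of_eq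
          rw [hc₂, hexp]
          have hre : r ^ (α + ((n : ℝ) + 1)) = r ^ (α + 1) * r ^ n := by
            rw [← Real.rpow_natCast r n, ← Real.rpow_add hr]
            ring_nf
          rw [hre, mul_pow]
          ring
  ------------------------------------------------------------------
  -- CONCLUSION
  ------------------------------------------------------------------
  refine ⟨max c₁⁻¹ c₂ + 1, ?_, 1 / 2, by norm_num, ?_⟩
  · have : c₂ ≤ max c₁⁻¹ c₂ := le_max_right _ _
    linarith
  · intro r hr hr2
    have hCl : (max c₁⁻¹ c₂ + 1)⁻¹ ≤ c₁ := by
      have hmx : c₁⁻¹ ≤ max c₁⁻¹ c₂ + 1 := by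
        have := le_max_left c₁⁻¹ c₂
        linarith
      calc (max c₁⁻¹ c₂ + 1)⁻¹ ≤ (c₁⁻¹)⁻¹ := by
            apply inv_anti₀ (by positivity) hmx
        _ = c₁ := inv_inv c₁
    have hCu : c₂ ≤ max c₁⁻¹ c₂ + 1 := by
      have := le_max_right c₁⁻¹ c₂
      linarith
    have hrp : (0:ℝ) ≤ r ^ ((dR + s) / 2) := Real.rpow_nonneg hr.le _
    constructor
    · calc ENNReal.ofReal ((max c₁⁻¹ c₂ + 1)⁻¹ * r ^ ((dR + s) / 2))
          ≤ ENNReal.ofReal (c₁ * r ^ ((dR + s) / 2)) :=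
            ENNReal.ofReal_le_ofReal (mul_le_mul_of_nonneg_right hCl hrp)
        _ ≤ ∫⁻ x in Metric.ball x₀ r ∩ Metric.ball 0 1, f x := hlower r hr hr2
        _ = μ (Metric.ball x₀ r) := (hball x₀ r).symm
    · calc μ (Metric.ball x₀ r)
          = ∫⁻ x in Metric.ball e₀ r ∩ Metric.ball 0 1, f x := by rw [hball x₀ r, hrot]
        _ ≤ ENNReal.ofReal (c₂ * r ^ ((dR + s) / 2)) := hupper r hr hr2
        _ ≤ ENNReal.ofReal ((max c₁⁻¹ c₂ + 1) * r ^ ((dR + s) / 2)) :=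
            ENNReal.ofReal_le_ofReal (mul_le_mul_of_nonneg_right hCu hrp)
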